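/- Let n ≥ 2 and let s = (s_1, ..., s_n) be a sequence of positive integers with s_i ≥ s_{i+1} for i = 1, ..., n-1 and s_n ≤ n-1. If the sequence s' = (s_1 - 1, s_2 - 1, ..., s_{s_n} - 1, s_{s_n+1}, ..., s_{n-1}) of length n-1 (obtained by deleting the last term s_n and subtracting 1 from each of the first s_n terms) is connected and graphic, then s is connected and graphic. -/

import Mathlib

/-- A sequence `s` of length `n` is graphic if it is the degree sequence of a
finite simple graph on `n` vertices. -/
def Graphic (n : ℕ) (s : Fin n → ℕ) : Prop :=
  ∃ G : SimpleGraph (Fin n), ∃ _ : DecidableRel G.Adj, ∀ i, G.degree i = s i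

/-- A sequence `s` is connected and graphic if it is the degree sequence of a
connected finite simple graph on `n` vertices. -/
def ConnectedGraphic (n : ℕ) (s : Fin n → ℕ) : Prop :=
  ∃ G : SimpleGraph (Fin n), ∃ _ : DecidableRel G.Adj,
    G.Connected ∧ ∀ i, G.degree i = s i

theorem connected_havel_hakimi_mpr (n : ℕ) (hn : 2 ≤ n) (s : Fin n → ℕ)
    (hpos : ∀ i, 0 < s i) (hmono : Antitone s)
    (hmin : s ⟨n - 1, by omega⟩ ≤ n - 1)
    (s' : Fin (n - 1) → ℕ)
    (hs' : ∀ j : Fin (n - 1),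
      s' j = if j.val + 1 ≤ s ⟨n - 1, by omega⟩
             then s ⟨j.val, by omega⟩ - 1
             else s ⟨j.val, by omega⟩) :
    ConnectedGraphic (n - 1) s' → ConnectedGraphic n s := by
  rintro ⟨G', instG', hGc, hGd⟩
  obtain ⟨m, rfl⟩ : ∃ m, n = m + 1 := ⟨n - 1, by omega⟩
  set k : ℕ := s ⟨m + 1 - 1, by omega⟩ with hkdef
  have hk1 : 1 ≤ k := hpos _
  have hkm : k ≤ m := by simpa using hmin
  have hm0 : 0 < m := le_trans hk1 hkm
  let G : SimpleGraph (Fin (m + 1)) :=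
    { Adj := fun a b => a ≠ b ∧
        ((∃ (ha : a.val < m) (hb : b.val < m), G'.Adj ⟨a.val, ha⟩ ⟨b.val, hb⟩) ∨
         (a.val = m ∧ b.val < k) ∨ (b.val = m ∧ a.val < k))
      symm := by
        constructor
        rintro a b ⟨hne, h⟩
        refine ⟨hne.symm, ?_⟩
        rcases h with ⟨ha, hb, h⟩ | h | h
        · exact Or.inl ⟨hb, ha, h.symm⟩
        · exact Or.inr (Or.inr h)
        · exact Or.inr (Or.inl h)
      loopless := ⟨fun a h => h.1 rfl⟩ }
  haveI instG : DecidableRel G.Adj := Classical.decRel _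
  have hAdj_last : ∀ u : Fin (m + 1), G.Adj (Fin.last m) u ↔ u.val < k := by
    intro u
    constructor
    · rintro ⟨hne, h⟩
      rcases h with ⟨ha, _, _⟩ | ⟨_, hb⟩ | ⟨hb, _⟩
      · simp [Fin.last] at ha
      · exact hb
      · have : (Fin.last m).val = m := rfl
        omega
    · intro hu
      have hne : Fin.last m ≠ u := by
        intro h
        have : u.val = m := by rw [← h]; rfl
        omega
      exact ⟨hne, Or.inr (Or.inl ⟨rfl, hu⟩)⟩
  have hAdj_cast : ∀ j i : Fin m, G.Adj j.castSucc i.castSucc ↔ G'.Adj j i := by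
    intro j i
    constructor
    · rintro ⟨hne, h⟩
      rcases h with ⟨ha, hb, h⟩ | ⟨ha, _⟩ | ⟨hb, _⟩
      · exact h
      · have := j.isLt; simp [Fin.castSucc] at ha; omega
      · have := i.isLt; simp [Fin.castSucc] at hb; omega
    · intro h
      refine ⟨fun e => G'.ne_of_adj h (Fin.castSucc_injective m e), ?_⟩
      exact Or.inl ⟨j.isLt, i.isLt, h⟩
  have hAdj_cast_last : ∀ j : Fin m, G.Adj j.castSucc (Fin.last m) ↔ j.val < k := by
    intro j
    rw [G.adj_comm, hAdj_last]
    exact Iff.rfl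
  have hdeg : ∀ v : Fin (m + 1),
      G.degree v = ∑ u : Fin (m + 1), if G.Adj v u then 1 else 0 := by
    intro v
    rw [SimpleGraph.degree, SimpleGraph.neighborFinset_eq_filter, Finset.card_filter]
  have hdeg' : ∀ v : Fin m,
      G'.degree v = ∑ u : Fin (m + 1 - 1), if G'.Adj v u then 1 else 0 := by
    intro v
    rw [SimpleGraph.degree, SimpleGraph.neighborFinset_eq_filter, Finset.card_filter]
  have hdlast : G.degree (Fin.last m) = k := by
    rw [hdeg]
    rw [Finset.sum_congr rfl (fun u _ => by rw [if_congr (hAdj_last u) rfl rfl])]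
    rw [Fin.sum_univ_eq_sum_range (fun i => if i < k then (1 : ℕ) else 0)]
    rw [← Finset.card_filter]
    have : (Finset.range (m + 1)).filter (fun i => i < k) = Finset.range k := by
      ext x; simp only [Finset.mem_filter, Finset.mem_range]; omega
    rw [this, Finset.card_range]
  have hdcast : ∀ j : Fin m,
      G.degree j.castSucc = s' j + (if j.val < k then 1 else 0) := by
    intro j
    rw [hdeg, Fin.sum_univ_castSucc]
    congr 1
    · rw [Finset.sum_congr rfl (fun i _ => by rw [if_congr (hAdj_cast j i) rfl rfl])]
      rw [← hGd j]
      exact (hdeg' j).symm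
    · rw [if_congr (hAdj_cast_last j) rfl rfl]
  have hconn : G.Connected := by
    let f : G' →g G := ⟨Fin.castSucc, fun {a b} h => (hAdj_cast a b).mpr h⟩
    have hreach : ∀ v : Fin (m + 1), G.Reachable v (Fin.last m) := by
      intro v
      refine Fin.lastCases ?_ ?_ v
      · exact SimpleGraph.Reachable.refl _
      · intro j
        have h1 : G.Reachable j.castSucc ((⟨0, hm0⟩ : Fin m)).castSucc :=
          SimpleGraph.Reachable.map f (hGc.preconnected j ⟨0, hm0⟩)
        have h2 : G.Adj ((⟨0, hm0⟩ : Fin m)).castSucc (Fin.last m) :=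
          (hAdj_cast_last _).mpr hk1
        exact h1.trans h2.reachable
    rw [SimpleGraph.connected_iff]
    exact ⟨fun u v => (hreach u).trans (hreach v).symm, ⟨Fin.last m⟩⟩
  refine ⟨G, instG, hconn, ?_⟩
  intro i
  refine Fin.lastCases ?_ ?_ i
  · rw [hdlast, hkdef]
    exact congrArg s (Fin.ext rfl)
  · intro j
    rw [hdcast j, hs' j]
    have h1 : 0 < s (⟨j.val, by omega⟩ : Fin (m + 1)) := hpos _
    have h2 : s (⟨j.val, by omega⟩ : Fin (m + 1)) = s j.castSucc := by
      congr 1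
    rw [h2] at h1 ⊢
    rcases Nat.lt_or_ge j.val k with h | h
    · rw [if_pos (by omega : j.val + 1 ≤ k), if_pos h]
      omega
    · rw [if_neg (by omega : ¬ j.val + 1 ≤ k), if_neg (by omega : ¬ j.val < k)]
      omega
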